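/- Let 𝒜 be a central arrangement and X ∈ L_k(𝒜). Then the Euler restriction map ρ : D(𝒜) → D(𝒜^X) is generically surjective: at a generic point x ∈ X, the localized map D(𝒜)_x → D(𝒜^X)_x is surjective. In particular, if θ_E, θ₁, …, θ_s generate D(𝒜), then among the restrictions of θ₁,…,θ_s to X there are ℓ−k−1 elements that are independent over S^X = Sym(X*). -/

import Mathlib

open MvPolynomial Module

attribute [local instance] Classical.propDecidable

namespace ArrPaper

variable {K : Type*} [Field K] {ℓ m : ℕ}

/-- The polynomial coordinate ring `S = K[x₁,…,x_ℓ]`. -/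
abbrev S (K : Type*) [Field K] (ℓ : ℕ) := MvPolynomial (Fin ℓ) K

/-- A polynomial derivation of `S`, given by its values on the variables. -/
abbrev Deriv (K : Type*) [Field K] (ℓ : ℕ) := Fin ℓ → S K ℓ

/-- The linear form `∑ αᵢ xᵢ` as a polynomial. -/
noncomputable def lin (α : Fin ℓ → K) : S K ℓ := ∑ i, C (α i) * X i

/-- The value `θ(α)` of a derivation on a linear form `α`. -/
noncomputable def applyD (θ : Deriv K ℓ) (α : Fin ℓ → K) : S K ℓ := ∑ i, C (α i) * θ i

lemma applyD_add (θ η : Deriv K ℓ) (α : Fin ℓ → K) :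
    applyD (θ + η) α = applyD θ α + applyD η α := by
  simp [applyD, mul_add, Finset.sum_add_distrib]

lemma applyD_smul (f : S K ℓ) (θ : Deriv K ℓ) (α : Fin ℓ → K) :
    applyD (f • θ) α = f * applyD θ α := by
  simp only [applyD, Pi.smul_apply, smul_eq_mul, Finset.mul_sum]
  exact Finset.sum_congr rfl fun i _ => by ring

/-- The logarithmic derivation module `D(𝒜)` of an arrangement, where the
arrangement is specified by the finite set of its defining linear forms. -/
noncomputable def logDer (A : Finset (Fin ℓ → K)) : Submodule (S K ℓ) (Deriv K ℓ) where
  carrier := {θ | ∀ α ∈ A, lin α ∣ applyD θ α}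
  add_mem' := by
    intro a b ha hb α hα
    rw [applyD_add]
    exact dvd_add (ha α hα) (hb α hα)
  zero_mem' := by intro α hα; simp [applyD]
  smul_mem' := by
    intro f θ hθ β hβ
    rw [applyD_smul]
    exact (hθ β hβ).mul_left f

/-- The logarithmic derivation module `D(𝒜, m)` of a multiarrangement. -/
noncomputable def logDerM (A : Finset (Fin ℓ → K)) (mult : (Fin ℓ → K) → ℕ) :
    Submodule (S K ℓ) (Deriv K ℓ) where
  carrier := {θ | ∀ α ∈ A, (lin α) ^ (mult α) ∣ applyD θ α}
  add_mem' := by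
    intro a b ha hb α hα
    rw [applyD_add]
    exact dvd_add (ha α hα) (hb α hα)
  zero_mem' := by intro α hα; simp [applyD]
  smul_mem' := by
    intro f θ hθ β hβ
    rw [applyD_smul]
    exact (hθ β hβ).mul_left f

/-- The Euler derivation. -/
noncomputable def eulerD (K : Type*) [Field K] (ℓ : ℕ) : Deriv K ℓ := fun i => X i

/-- A derivation is homogeneous of degree `d` if all its coefficients are. -/
def IsHomog (θ : Deriv K ℓ) (d : ℕ) : Prop := ∀ i, (θ i).IsHomogeneous d

/-- A family is a (free) basis of a submodule of the derivation module. -/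
def IsBasisOf {ι : Type*} (θ : ι → Deriv K ℓ) (M : Submodule (S K ℓ) (Deriv K ℓ)) : Prop :=
  (∀ i, θ i ∈ M) ∧ LinearIndependent (S K ℓ) θ ∧ Submodule.span (S K ℓ) (Set.range θ) = M

/-- `𝒜` is free with exponents `d₁,…,d_ℓ`. -/
def IsFreeWithExp (A : Finset (Fin ℓ → K)) (d : Fin ℓ → ℕ) : Prop :=
  ∃ θ : Fin ℓ → Deriv K ℓ, IsBasisOf θ (logDer A) ∧ ∀ i, IsHomog (θ i) (d i)

/-- `(𝒜, m)` is free with exponents `d₁,…,d_ℓ`. -/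
def IsFreeWithExpM (A : Finset (Fin ℓ → K)) (mult : (Fin ℓ → K) → ℕ) (d : Fin ℓ → ℕ) : Prop :=
  ∃ θ : Fin ℓ → Deriv K ℓ, IsBasisOf θ (logDerM A mult) ∧ ∀ i, IsHomog (θ i) (d i)

/-- The hyperplane `ker α ⊆ Kˡ` attached to a linear form `α`. -/
noncomputable def hyp (α : Fin ℓ → K) : Submodule K (Fin ℓ → K) :=
  LinearMap.ker (∑ i, α i • LinearMap.proj i : (Fin ℓ → K) →ₗ[K] K)

/-- The restriction `𝒜^H = {H ∩ L : L ∈ 𝒜'}` of an arrangement `𝒜'` to the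
hyperplane `H = ker α_H`, as a finite set of subspaces. -/
noncomputable def restH (A' : Finset (Fin ℓ → K)) (αH : Fin ℓ → K) :
    Finset (Submodule K (Fin ℓ → K)) :=
  A'.image (fun β => hyp αH ⊓ hyp β)

/-- The restriction `𝒜^X = {X ∩ H : H ∈ 𝒜, X ⊄ H}` to a subspace `X`. -/
noncomputable def restArr (A : Finset (Fin ℓ → K)) (Xs : Submodule K (Fin ℓ → K)) :
    Finset (Submodule K (Fin ℓ → K)) :=
  (A.filter (fun β => ¬ Xs ≤ hyp β)).image (fun β => Xs ⊓ hyp β)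

/-- Codimension of a subspace of `Kˡ`. -/
noncomputable def codim (Xs : Submodule K (Fin ℓ → K)) : ℕ := ℓ - Module.finrank K Xs

/-- The intersection lattice `L(𝒜)`. -/
noncomputable def LSet (A : Finset (Fin ℓ → K)) : Finset (Submodule K (Fin ℓ → K)) :=
  A.powerset.image (fun b => b.inf hyp)

/-- Pullback (restriction) of polynomial functions along a linear map
`ι : Kᵐ → Kˡ`. -/
noncomputable def pullback (ι : (Fin m → K) →ₗ[K] (Fin ℓ → K)) : S K ℓ →ₐ[K] S K m :=
  aeval (fun j => ∑ i, C (ι (Pi.single i 1) j) * X i)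

/-- The (Euler) restriction of a derivation onto the subspace `im ι ≅ Kᵐ`,
computed using chosen linear forms `γ i` lifting the coordinates of `Kᵐ`. -/
noncomputable def restD (ι : (Fin m → K) →ₗ[K] (Fin ℓ → K)) (γ : Fin m → (Fin ℓ → K))
    (θ : Deriv K ℓ) : Deriv K m :=
  fun i => pullback ι (applyD θ (γ i))

/-- `γ` is a system of coordinate lifts for `ι : Kᵐ → Kˡ`. -/
def CoordLifts (ι : (Fin m → K) →ₗ[K] (Fin ℓ → K)) (γ : Fin m → (Fin ℓ → K)) : Prop :=
  ∀ i, pullback ι (lin (γ i)) = X i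

/-- `B` (a finite set of forms on `Kᵐ`) represents the restricted arrangement
`𝒜^X` via the embedding `ι : Kᵐ ≅ X ⊆ Kˡ`. -/
def Represents (B : Finset (Fin m → K)) (ι : (Fin m → K) →ₗ[K] (Fin ℓ → K))
    (A : Finset (Fin ℓ → K)) (Xs : Submodule K (Fin ℓ → K)) : Prop :=
  (∀ b ∈ B, b ≠ 0) ∧ B.image (fun b => (hyp b).map ι) = restArr A Xs ∧
    B.card = (restArr A Xs).card

/-- The restricted arrangement `𝒜^X` is free with exponents `e`. -/
def RestFree (A : Finset (Fin ℓ → K)) (Xs : Submodule K (Fin ℓ → K)) (m : ℕ)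
    (e : Fin m → ℕ) : Prop :=
  ∃ (φ : (Fin m → K) ≃ₗ[K] Xs) (B : Finset (Fin m → K)),
    Represents B (Xs.subtype ∘ₗ φ.toLinearMap) A Xs ∧ IsFreeWithExp B e

/-- The Ziegler multiplicity of a hyperplane `ker b ⊆ Kᵐ ≅ H` obtained by
restricting `𝒜` onto `H = ker α_H`. -/
noncomputable def zMult (A : Finset (Fin ℓ → K)) (αH : Fin ℓ → K)
    (ι : (Fin m → K) →ₗ[K] (Fin ℓ → K)) (b : Fin m → K) : ℕ :=
  ((A.erase αH).filter (fun β => hyp αH ⊓ hyp β = (hyp b).map ι)).card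

/-- `θ ↦ θ(α)` as an `S`-linear map. -/
noncomputable def applyDL (α : Fin ℓ → K) : Deriv K ℓ →ₗ[S K ℓ] S K ℓ where
  toFun θ := applyD θ α
  map_add' a b := applyD_add a b α
  map_smul' f θ := by simpa using applyD_smul f θ α

/-- `D_H(𝒜) = {θ ∈ D(𝒜) : θ(α_H) = 0}`. -/
noncomputable def DH (A : Finset (Fin ℓ → K)) (αH : Fin ℓ → K) :
    Submodule (S K ℓ) (Deriv K ℓ) :=
  logDer A ⊓ LinearMap.ker (applyDL αH)

end ArrPaper


section Stmt10Aux

open ArrPaper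

variable {K : Type*} [Field K] {ℓ m : ℕ}

/-- Restriction of a linear form `α` on `Kˡ` to `Kᵐ` along `ι`. -/
noncomputable def push (ι : (Fin m → K) →ₗ[K] (Fin ℓ → K)) (α : Fin ℓ → K) : Fin m → K :=
  fun i => ∑ j, α j * ι (Pi.single i 1) j

/-- The derivation on `Kˡ` with prescribed values `w j` on the coordinate lifts. -/
noncomputable def mkD (ι : (Fin m → K) →ₗ[K] (Fin ℓ → K)) (w : Fin m → S K ℓ) : Deriv K ℓ :=
  fun i => ∑ j, C (ι (Pi.single j 1) i) * w j

lemma applyD_mkD (ι : (Fin m → K) →ₗ[K] (Fin ℓ → K)) (w : Fin m → S K ℓ) (α : Fin ℓ → K) :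
    applyD (mkD ι w) α = ∑ j, C (push ι α j) * w j := by
  unfold applyD mkD push
  rw [show (∑ i, C (α i) * ∑ j, C (ι (Pi.single j 1) i) * w j)
      = ∑ i, ∑ j, C (α i) * (C (ι (Pi.single j 1) i) * w j) by
    exact Finset.sum_congr rfl fun i _ => Finset.mul_sum _ _ _]
  rw [Finset.sum_comm]
  refine Finset.sum_congr rfl fun j _ => ?_
  rw [map_sum, Finset.sum_mul]
  exact Finset.sum_congr rfl fun i _ => by rw [map_mul]; ring

lemma pullback_lin (ι : (Fin m → K) →ₗ[K] (Fin ℓ → K)) (α : Fin ℓ → K) :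
    pullback ι (lin α) = lin (push ι α) := by
  unfold pullback lin push
  rw [map_sum]
  rw [show (∑ j, (aeval fun j => ∑ i, C (ι (Pi.single i 1) j) * X i : S K ℓ →ₐ[K] S K m)
        (C (α j) * X j)) = ∑ j, ∑ i, C (α j) * (C (ι (Pi.single i 1) j) * X i) by
    refine Finset.sum_congr rfl fun j _ => ?_
    rw [map_mul, aeval_C, aeval_X, algebraMap_eq, Finset.mul_sum]]
  rw [Finset.sum_comm]
  refine Finset.sum_congr rfl fun i _ => ?_
  rw [map_sum, Finset.sum_mul]
  exact Finset.sum_congr rfl fun j _ => by rw [map_mul]; ring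

lemma eval_lin (y : Fin m → K) (c : Fin m → K) : eval y (lin c) = ∑ i, c i * y i := by
  simp [lin]

lemma mem_hyp {β x : Fin ℓ → K} : x ∈ hyp β ↔ ∑ i, β i * x i = 0 := by
  simp [hyp, LinearMap.mem_ker, LinearMap.sum_apply, LinearMap.smul_apply,
    LinearMap.proj_apply, smul_eq_mul]

lemma eval_lin_push (ι : (Fin m → K) →ₗ[K] (Fin ℓ → K)) (β : Fin ℓ → K) (y : Fin m → K) :
    eval y (lin (push ι β)) = ∑ t, β t * ι y t := by
  rw [eval_lin]
  have hy : ι y = ∑ i, y i • ι (Pi.single i 1) := by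
    conv_lhs => rw [show y = ∑ i, Pi.single i (y i) from (Finset.univ_sum_single y).symm]
    rw [map_sum]
    refine Finset.sum_congr rfl fun i _ => ?_
    rw [← map_smul]
    congr 1
    funext j
    simp [Pi.single_apply]
  rw [show (∑ t, β t * ι y t) = ∑ t, ∑ i, β t * (y i * ι (Pi.single i 1) t) by
    refine Finset.sum_congr rfl fun t _ => ?_
    rw [hy]
    simp only [Finset.sum_apply, Pi.smul_apply, smul_eq_mul]
    rw [Finset.mul_sum]]
  rw [Finset.sum_comm]
  unfold push
  refine Finset.sum_congr rfl fun i _ => ?_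
  rw [Finset.sum_mul]
  exact Finset.sum_congr rfl fun t _ => by ring

lemma coeff_lin (c : Fin ℓ → K) (t : Fin ℓ) :
    coeff (Finsupp.single t 1) (lin c) = c t := by
  unfold lin
  rw [show (coeff (Finsupp.single t 1) (∑ i, C (c i) * X i))
      = ∑ i, c i * (if Finsupp.single i 1 = Finsupp.single t 1 then (1:K) else 0) by
    rw [MvPolynomial.coeff_sum]
    exact Finset.sum_congr rfl fun i _ => by rw [coeff_C_mul, coeff_X']]
  rw [Finset.sum_eq_single t]
  · simp
  · intro i _ hit
    rw [if_neg, mul_zero]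
    intro h
    exact hit (by simpa using (Finsupp.single_left_inj (one_ne_zero)).mp h)
  · intro h; exact absurd (Finset.mem_univ t) h

lemma push_coord {ι : (Fin m → K) →ₗ[K] (Fin ℓ → K)} {γ : Fin m → (Fin ℓ → K)}
    (hγ : CoordLifts ι γ) (i : Fin m) : push ι (γ i) = Pi.single i 1 := by
  have h : lin (push ι (γ i)) = (X i : S K m) := by rw [← pullback_lin]; exact hγ i
  funext t
  have := congrArg (coeff (Finsupp.single t 1)) h
  rw [coeff_lin, coeff_X'] at this
  rw [this, Pi.single_apply]
  by_cases h' : t = i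
  · subst h'; simp
  · rw [if_neg h', if_neg]
    intro hh
    exact h' (by simpa using ((Finsupp.single_left_inj (one_ne_zero)).mp hh).symm)

lemma applyD_mkD_coord {ι : (Fin m → K) →ₗ[K] (Fin ℓ → K)} {γ : Fin m → (Fin ℓ → K)}
    (hγ : CoordLifts ι γ) (w : Fin m → S K ℓ) (i : Fin m) :
    applyD (mkD ι w) (γ i) = w i := by
  rw [applyD_mkD, push_coord hγ]
  rw [Finset.sum_eq_single i]
  · simp
  · intro j _ hji
    rw [Pi.single_eq_of_ne hji]
    simp
  · intro h; exact absurd (Finset.mem_univ i) h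

lemma pullback_sec {ι : (Fin m → K) →ₗ[K] (Fin ℓ → K)} {γ : Fin m → (Fin ℓ → K)}
    (hγ : CoordLifts ι γ) (p : S K m) :
    pullback ι (aeval (fun j => lin (γ j)) p) = p := by
  have h : (pullback ι).comp (aeval (fun j => lin (γ j)) : S K m →ₐ[K] S K ℓ)
      = AlgHom.id K (S K m) := by
    apply MvPolynomial.algHom_ext
    intro i
    simp only [AlgHom.comp_apply, aeval_X, AlgHom.id_apply]
    exact hγ i
  calc pullback ι (aeval (fun j => lin (γ j)) p)
      = ((pullback ι).comp (aeval (fun j => lin (γ j)) : S K m →ₐ[K] S K ℓ)) p := rfl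
    _ = p := by rw [h]; rfl

lemma mem_logDer {A : Finset (Fin ℓ → K)} {θ : Deriv K ℓ} :
    θ ∈ logDer A ↔ ∀ α ∈ A, lin α ∣ applyD θ α := Iff.rfl

lemma mkD_mem_logDer (A : Finset (Fin ℓ → K)) (Xs : Submodule K (Fin ℓ → K))
    (ι : (Fin m → K) →ₗ[K] (Fin ℓ → K)) (hrange : LinearMap.range ι = Xs)
    (w : Fin m → S K ℓ)
    (hw : ∀ j, (∏ β ∈ A.filter (fun β => ¬ Xs ≤ hyp β), lin β) ∣ w j) :
    mkD ι w ∈ logDer A := by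
  rw [mem_logDer]
  intro α hα
  rw [applyD_mkD]
  by_cases hc : Xs ≤ hyp α
  · have hp : push ι α = 0 := by
      funext i
      have hmem : ι (Pi.single i 1) ∈ Xs := by rw [← hrange]; exact ⟨_, rfl⟩
      have := mem_hyp.mp (hc hmem)
      simpa [push] using this
    simp [hp]
  · have hdvd : lin α ∣ ∏ β ∈ A.filter (fun β => ¬ Xs ≤ hyp β), lin β :=
      Finset.dvd_prod_of_mem _ (Finset.mem_filter.mpr ⟨hα, hc⟩)
    exact Finset.dvd_sum fun j _ => ((hdvd.trans (hw j)).mul_left _)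

lemma span_image_semilinear {R R' : Type*} [CommRing R] [CommRing R']
    {M : Type*} [AddCommGroup M] [Module R M] {ι' : Type*}
    (σ : R → R') (χ : M → (ι' → R')) (hadd : ∀ a b, χ (a + b) = χ a + χ b) (hzero : χ 0 = 0)
    (hsmul : ∀ (r : R) (x : M), χ (r • x) = fun i => σ r * χ x i) {s : Set M} {v : M}
    (hv : v ∈ Submodule.span R s) : χ v ∈ Submodule.span R' (χ '' s) := by
  induction hv using Submodule.span_induction with
  | mem x hx => exact Submodule.subset_span ⟨x, hx, rfl⟩
  | zero => rw [hzero]; exact Submodule.zero_mem _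
  | add a b _ _ ha hb => rw [hadd]; exact Submodule.add_mem _ ha hb
  | smul r x _ hx =>
      rw [hsmul]
      have h1 : (fun i => σ r * χ x i) = σ r • χ x := by
        funext i
        rw [Pi.smul_apply, smul_eq_mul]
      rw [h1]
      exact Submodule.smul_mem _ _ hx

end Stmt10Aux


set_option maxHeartbeats 2000000 in
set_option synthInstance.maxHeartbeats 400000 in
open ArrPaper in
/-- the Euler restriction map `ρ : D(𝒜) → D(𝒜^X)` is generically
surjective; in particular any generating set of `D(𝒜)` yields `ℓ-k-1`
restrictions independent over `S^X`. -/
theorem stmt10 {K : Type*} [Field K] [Infinite K] {ℓ k : ℕ} (hk : k ≤ ℓ)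
    (A : Finset (Fin ℓ → K)) (hA0 : ∀ α ∈ A, α ≠ 0)
    (Xs : Submodule K (Fin ℓ → K)) (hX : ∃ b ⊆ A, Xs = b.inf hyp)
    (hcodim : codim Xs = k)
    (φ : (Fin (ℓ - k) → K) ≃ₗ[K] Xs)
    (γ : Fin (ℓ - k) → (Fin ℓ → K))
    (hγ : CoordLifts (Xs.subtype ∘ₗ φ.toLinearMap) γ)
    (B : Finset (Fin (ℓ - k) → K))
    (hB : Represents B (Xs.subtype ∘ₗ φ.toLinearMap) A Xs) :
    (∃ x, ∃ hx : x ∈ Xs, (∀ β ∈ A, ¬ Xs ≤ hyp β → x ∉ hyp β) ∧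
      ∀ η ∈ logDer B, ∃ θ ∈ logDer A, ∃ f : S K (ℓ - k),
        MvPolynomial.eval (φ.symm ⟨x, hx⟩) f ≠ 0 ∧
        f • η = restD (Xs.subtype ∘ₗ φ.toLinearMap) γ θ) ∧
    (∀ (s : ℕ) (θ : Fin s → Deriv K ℓ),
      Submodule.span (S K ℓ) ({eulerD K ℓ} ∪ Set.range θ) = logDer A →
      ∃ t : Finset (Fin s), t.card = ℓ - k - 1 ∧
        LinearIndependent (S K (ℓ - k))
          (fun i : t => restD (Xs.subtype ∘ₗ φ.toLinearMap) γ (θ i))) := by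
  classical
  set ι : (Fin (ℓ - k) → K) →ₗ[K] (Fin ℓ → K) := Xs.subtype ∘ₗ φ.toLinearMap with hι
  have hrange : LinearMap.range ι = Xs := by
    rw [hι, LinearMap.range_comp, LinearEquiv.range, Submodule.map_top, Submodule.range_subtype]
  set Af := A.filter (fun β => ¬ Xs ≤ hyp β) with hAf
  set Qt : S K ℓ := ∏ β ∈ Af, lin β with hQt
  set Qb : S K (ℓ - k) := ∏ β ∈ Af, lin (push ι β) with hQb
  have hQbQ : pullback ι Qt = Qb := by
    rw [hQt, map_prod]
    exact Finset.prod_congr rfl fun β _ => pullback_lin ι β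
  have hfac : ∀ β ∈ Af, lin (push ι β) ≠ 0 := by
    intro β hβ h0
    obtain ⟨hβA, hβn⟩ := Finset.mem_filter.mp hβ
    obtain ⟨v, hvX, hvn⟩ := SetLike.not_le_iff_exists.mp hβn
    rw [← hrange] at hvX
    obtain ⟨y0, rfl⟩ := hvX
    apply hvn
    rw [mem_hyp]
    have h1 := eval_lin_push ι β y0
    rw [h0] at h1
    simpa using h1.symm
  have hQbne : Qb ≠ 0 := by rw [hQb]; exact Finset.prod_ne_zero_iff.mpr hfac
  obtain ⟨y, hyQ⟩ : ∃ y, eval y Qb ≠ 0 := by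
    by_contra h
    push_neg at h
    exact hQbne (MvPolynomial.funext fun y => by rw [h y, map_zero])
  have hevalfac : ∀ β ∈ Af, eval y (lin (push ι β)) ≠ 0 := by
    intro β hβ h0
    apply hyQ
    rw [hQb, map_prod]
    exact Finset.prod_eq_zero hβ h0
  have hxX : ι y ∈ Xs := by rw [← hrange]; exact ⟨y, rfl⟩
  have hsymm : φ.symm ⟨ι y, hxX⟩ = y := by
    have h1 : (⟨ι y, hxX⟩ : Xs) = φ y := Subtype.ext rfl
    rw [h1, LinearEquiv.symm_apply_apply]
  constructor
  · refine ⟨ι y, hxX, ?_, ?_⟩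
    · intro β hβA hβn hmem
      exact hevalfac β (Finset.mem_filter.mpr ⟨hβA, hβn⟩)
        (by rw [eval_lin_push]; exact mem_hyp.mp hmem)
    · intro η hη
      set w : Fin (ℓ - k) → S K ℓ := fun j => Qt * aeval (fun j' => lin (γ j')) (η j) with hw
      refine ⟨mkD ι w, mkD_mem_logDer A Xs ι hrange w (fun j => ⟨_, rfl⟩), Qb, ?_, ?_⟩
      · rw [hsymm]; exact hyQ
      · funext i
        show Qb * η i = restD ι γ (mkD ι w) i
        unfold restD
        rw [applyD_mkD_coord hγ w i, hw, map_mul, hQbQ, pullback_sec hγ]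
  · intro s θf hspan
    set c : Deriv K (ℓ - k) → (Fin (ℓ - k) → (FractionRing (S K (ℓ - k)))) := fun v i => algebraMap (S K (ℓ - k)) (FractionRing (S K (ℓ - k))) (v i) with hc
    set χ : Deriv K ℓ → (Fin (ℓ - k) → (FractionRing (S K (ℓ - k)))) := fun v => c (restD ι γ v) with hχ
    set u : Fin s → (Fin (ℓ - k) → (FractionRing (S K (ℓ - k)))) := fun i => χ (θf i) with hu
    have halg : Function.Injective (algebraMap (S K (ℓ - k)) (FractionRing (S K (ℓ - k)))) := IsFractionRing.injective _ _
    have hχadd : ∀ a b, χ (a + b) = χ a + χ b := by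
      intro a b
      funext i
      simp [hχ, hc, restD, applyD_add, map_add]
    have hχzero : χ 0 = 0 := by
      funext i
      simp [hχ, hc, restD, applyD]
    have hχeuler : χ (eulerD K ℓ) = fun i => algebraMap (S K (ℓ - k)) (FractionRing (S K (ℓ - k))) (X i) := by
      funext i
      show algebraMap (S K (ℓ - k)) (FractionRing (S K (ℓ - k))) (pullback ι (applyD (eulerD K ℓ) (γ i))) = _
      have h1 : applyD (eulerD K ℓ) (γ i) = lin (γ i) := rfl
      rw [h1, hγ i]
    set gens : Set (Fin (ℓ - k) → (FractionRing (S K (ℓ - k)))) := {χ (eulerD K ℓ)} ∪ Set.range u with hgens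
    have hgen : ∀ v ∈ logDer A, χ v ∈ Submodule.span (FractionRing (S K (ℓ - k))) gens := by
      intro v hv
      rw [← hspan] at hv
      have h1 := span_image_semilinear
        (fun f => algebraMap (S K (ℓ - k)) (FractionRing (S K (ℓ - k))) (pullback ι f)) χ
        hχadd hχzero (fun r x => by
          funext i
          simp [hχ, hc, restD, applyD_smul, map_mul, mul_comm]) hv
      refine Submodule.span_mono ?_ h1
      rintro _ ⟨g, hg, rfl⟩
      rcases hg with hg | ⟨i, rfl⟩
      · left; rw [Set.mem_singleton_iff.mp hg]; rfl
      · right; exact ⟨i, rfl⟩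
    have hθj : ∀ j : Fin (ℓ - k), ∃ d ∈ logDer A,
        χ d = (algebraMap (S K (ℓ - k)) (FractionRing (S K (ℓ - k))) Qb) • Pi.single j (1 : (FractionRing (S K (ℓ - k)))) := by
      intro j
      refine ⟨mkD ι (Pi.single j Qt), mkD_mem_logDer A Xs ι hrange _ ?_, ?_⟩
      · intro j'
        by_cases hj : j' = j
        · subst hj; rw [Pi.single_eq_same]
        · rw [Pi.single_eq_of_ne hj]; exact dvd_zero _
      · funext i
        show algebraMap (S K (ℓ - k)) (FractionRing (S K (ℓ - k))) (pullback ι (applyD (mkD ι (Pi.single j Qt)) (γ i))) = _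
        rw [applyD_mkD_coord hγ]
        by_cases hij : i = j
        · subst hij
          rw [Pi.single_eq_same, hQbQ, Pi.smul_apply, Pi.single_eq_same, smul_eq_mul, mul_one]
        · rw [Pi.single_eq_of_ne hij, map_zero, map_zero, Pi.smul_apply,
            Pi.single_eq_of_ne hij, smul_zero]
    have hsingle : ∀ j : Fin (ℓ - k), Pi.single j (1 : (FractionRing (S K (ℓ - k)))) ∈ Submodule.span (FractionRing (S K (ℓ - k))) gens := by
      intro j
      obtain ⟨d, hd, hχd⟩ := hθj j
      have h1 := hgen d hd
      rw [hχd] at h1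
      have hne : algebraMap (S K (ℓ - k)) (FractionRing (S K (ℓ - k))) Qb ≠ 0 := fun h0 =>
        hQbne (halg (by rw [h0, map_zero]))
      have h2 := Submodule.smul_mem _ (algebraMap (S K (ℓ - k)) (FractionRing (S K (ℓ - k))) Qb)⁻¹ h1
      rwa [smul_smul, inv_mul_cancel₀ hne, one_smul] at h2
    have htop : (⊤ : Submodule (FractionRing (S K (ℓ - k))) (Fin (ℓ - k) → (FractionRing (S K (ℓ - k))))) ≤ Submodule.span (FractionRing (S K (ℓ - k))) gens := by
      intro v _
      have hv : v = ∑ j, v j • Pi.single j (1 : (FractionRing (S K (ℓ - k)))) := by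
        funext i
        rw [Finset.sum_apply]
        rw [show (∑ j, (v j • Pi.single j (1:(FractionRing (S K (ℓ - k))))) i)
            = ∑ j, (if i = j then v j else 0) by
          refine Finset.sum_congr rfl fun j _ => ?_
          rw [Pi.smul_apply, Pi.single_apply, smul_eq_mul]
          by_cases h : i = j <;> simp [h]]
        simp
      rw [hv]
      exact Submodule.sum_mem _ fun j _ => Submodule.smul_mem _ _ (hsingle j)
    set W := Submodule.span (FractionRing (S K (ℓ - k))) (Set.range u) with hW
    have hrankW : (ℓ - k) - 1 ≤ Module.finrank (FractionRing (S K (ℓ - k))) W := by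
      have hsup : Submodule.span (FractionRing (S K (ℓ - k))) {χ (eulerD K ℓ)} ⊔ W = ⊤ := by
        refine le_antisymm le_top ?_
        rw [← Submodule.span_union, ← hgens]
        exact htop
      have h1 : Module.finrank (FractionRing (S K (ℓ - k))) (Fin (ℓ - k) → (FractionRing (S K (ℓ - k)))) = (ℓ - k) := by
        rw [Module.finrank_pi]; simp
      have h2 : Module.finrank (FractionRing (S K (ℓ - k))) (Submodule.span (FractionRing (S K (ℓ - k))) {χ (eulerD K ℓ)}) ≤ 1 := by
        by_cases h0 : χ (eulerD K ℓ) = 0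
        · rw [h0, Submodule.span_zero_singleton]; simp
        · rw [finrank_span_singleton h0]
      have h3 := Submodule.finrank_add_le_finrank_add_finrank
        (Submodule.span (FractionRing (S K (ℓ - k))) {χ (eulerD K ℓ)}) W
      rw [hsup, finrank_top, h1] at h3
      omega
    obtain ⟨b, hbsub, hbspan, hbind⟩ := exists_linearIndependent (FractionRing (S K (ℓ - k))) (Set.range u)
    have hbfin : b.Finite := (Set.finite_range u).subset hbsub
    haveI := hbfin.fintype
    have hcard : Module.finrank (FractionRing (S K (ℓ - k))) W = b.toFinset.card := by
      rw [hW, ← hbspan]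
      exact finrank_span_set_eq_card hbind
    have hle : (ℓ - k) - 1 ≤ b.toFinset.card := by rw [← hcard]; exact hrankW
    obtain ⟨t0, ht0sub, ht0card⟩ := Finset.exists_subset_card_eq (s := b.toFinset) (n := (ℓ - k) - 1) hle
    have ht0b : ∀ v ∈ t0, v ∈ b := fun v hv => Set.mem_toFinset.mp (ht0sub hv)
    by_cases ht0e : t0 = ∅
    · refine ⟨∅, ?_, ?_⟩
      · rw [Finset.card_empty, ← ht0card, ht0e, Finset.card_empty]
      · haveI : IsEmpty ((∅ : Finset (Fin s)) : Type) :=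
          ⟨fun x => absurd x.2 (Finset.notMem_empty _)⟩
        exact linearIndependent_empty_type
    · have hns : Nonempty (Fin s) := by
        obtain ⟨v, hv⟩ := Finset.nonempty_iff_ne_empty.mpr ht0e
        obtain ⟨i, -⟩ := hbsub (ht0b v hv)
        exact ⟨i⟩
      set g : (Fin (ℓ - k) → (FractionRing (S K (ℓ - k)))) → Fin s := Function.invFun u with hg
      have hug : ∀ v ∈ t0, u (g v) = v := fun v hv => Function.invFun_eq (hbsub (ht0b v hv))
      have hinj : Set.InjOn g t0 := by
        intro a ha b' hb' h
        rw [← hug a ha, ← hug b' hb', h]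
      refine ⟨t0.image g, ?_, ?_⟩
      · rw [Finset.card_image_of_injOn hinj, ht0card]
      · set t : Finset (Fin s) := t0.image g with ht
        have hmemb : ∀ i : t, u i ∈ b := by
          intro i
          obtain ⟨v, hv, hgv⟩ := Finset.mem_image.mp i.2
          rw [← hgv, hug v hv]
          exact ht0b v hv
        have hindt : LinearIndependent (FractionRing (S K (ℓ - k))) (fun i : t => u i) := by
          have einj : Function.Injective (fun i : t => (⟨u i, hmemb i⟩ : b)) := by
            intro i j hij
            have h1 : u i = u j := congrArg Subtype.val hij
            obtain ⟨v, hv, hgv⟩ := Finset.mem_image.mp i.2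
            obtain ⟨v', hv', hgv'⟩ := Finset.mem_image.mp j.2
            have h2 : v = v' := by
              rw [← hug v hv, ← hug v' hv', hgv, hgv', h1]
            apply Subtype.ext
            rw [← hgv, ← hgv', h2]
          exact hbind.comp _ einj
        rw [Fintype.linearIndependent_iff]
        intro gg hgg j
        have hcsum : ∑ i : t, (algebraMap (S K (ℓ - k)) (FractionRing (S K (ℓ - k))) (gg i)) • u i = 0 := by
          funext j'
          rw [Finset.sum_apply]
          have h0 : (∑ i : t, gg i • restD ι γ (θf i)) j' = 0 := by rw [hgg]; rfl
          rw [Finset.sum_apply] at h0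
          have h1 : ∀ i : t, ((algebraMap (S K (ℓ - k)) (FractionRing (S K (ℓ - k))) (gg i)) • u i) j'
              = algebraMap (S K (ℓ - k)) (FractionRing (S K (ℓ - k))) ((gg i • restD ι γ (θf i)) j') := by
            intro i
            rw [Pi.smul_apply, Pi.smul_apply, smul_eq_mul, smul_eq_mul, map_mul]
          rw [Finset.sum_congr rfl (fun i _ => h1 i), ← map_sum, h0, map_zero]
          rfl
        have h2 := Fintype.linearIndependent_iff.mp hindt
          (fun i => algebraMap (S K (ℓ - k)) (FractionRing (S K (ℓ - k))) (gg i)) hcsum j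
        exact halg (by rw [h2, map_zero])
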